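/- Let H = H₊ ⊕ H₋ be an orthogonal decomposition of a Hilbert space, let A be a bounded self-adjoint operator on H₊ that is uniformly positive (i.e. there is α > 0 with ⟨Ax,x⟩ ≥ α‖x‖² for all x), let K : H₋ → H₊ be bounded with ‖K‖ < 1, and let D be a bounded self-adjoint operator on H₋ such that D + K*AK is uniformly positive. Then the block operator S = [[A, -AK],[K*A, D]] on H₊ ⊕ H₋ is boundedly invertible. -/

import Mathlib

open ContinuousLinearMap

lemma isUnit_of_coercive {E : Type*} [NormedAddCommGroup E] [InnerProductSpace ℂ E]
    [CompleteSpace E] (T : E →L[ℂ] E) {c : ℝ} (hc : 0 < c)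
    (h : ∀ x : E, c * ‖x‖ ^ 2 ≤ (inner ℂ (T x) x : ℂ).re) : IsUnit T := by
  rw [ContinuousLinearMap.isUnit_iff_bijective,
    ContinuousLinearMap.bijective_iff_dense_range_and_antilipschitz]
  have hbound : ∀ x : E, ‖x‖ ≤ c⁻¹ * ‖T x‖ := by
    intro x
    rcases eq_or_ne x 0 with rfl | hx
    · simp
    have hxpos : 0 < ‖x‖ := norm_pos_iff.mpr hx
    have h1 : c * ‖x‖ ^ 2 ≤ ‖T x‖ * ‖x‖ := by
      refine (h x).trans ?_
      calc (inner ℂ (T x) x : ℂ).re ≤ ‖(inner ℂ (T x) x : ℂ)‖ := Complex.re_le_norm _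
        _ ≤ ‖T x‖ * ‖x‖ := norm_inner_le_norm _ _
    rw [le_inv_mul_iff₀ hc]
    nlinarith
  refine ⟨?_, ⟨⟨c⁻¹, by positivity⟩, T.antilipschitz_of_bound fun x => ?_⟩⟩
  · rw [Submodule.topologicalClosure_eq_top_iff, Submodule.eq_bot_iff]
    intro v hv
    have h0 : (inner ℂ (T v) v : ℂ) = 0 := hv (T v) ⟨v, rfl⟩
    have := h v
    rw [h0] at this
    simp only [Complex.zero_re] at this
    by_contra hv0
    have hp : 0 < ‖v‖ := norm_pos_iff.mpr hv0
    nlinarith [mul_pos hc (pow_pos hp 2)]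
  · exact hbound x

/-- The block operator `S = [[A, -AK],[K*A, D]]` acting on `Hp × Hm`
(`Hp` playing the role of `H₊`, `Hm` that of `H₋`). -/
noncomputable def blockOp {Hp Hm : Type*} [NormedAddCommGroup Hp] [InnerProductSpace ℂ Hp]
    [NormedAddCommGroup Hm] [InnerProductSpace ℂ Hm] [CompleteSpace Hp] [CompleteSpace Hm]
    (A : Hp →L[ℂ] Hp) (K : Hm →L[ℂ] Hp) (D : Hm →L[ℂ] Hm) :
    (Hp × Hm) →L[ℂ] (Hp × Hm) :=
  ((A ∘L fst ℂ Hp Hm) - (A ∘L K ∘L snd ℂ Hp Hm)).prod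
    (((adjoint K) ∘L A ∘L fst ℂ Hp Hm) + (D ∘L snd ℂ Hp Hm))

theorem stmt0 {Hp Hm : Type*} [NormedAddCommGroup Hp] [InnerProductSpace ℂ Hp]
    [NormedAddCommGroup Hm] [InnerProductSpace ℂ Hm] [CompleteSpace Hp] [CompleteSpace Hm]
    (A : Hp →L[ℂ] Hp) (K : Hm →L[ℂ] Hp) (D : Hm →L[ℂ] Hm)
    (hA : IsSelfAdjoint A)
    (hApos : ∃ α > (0:ℝ), ∀ x : Hp, α * ‖x‖ ^ 2 ≤ (inner ℂ (A x) x : ℂ).re)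
    (hK : ‖K‖ < 1)
    (hD : IsSelfAdjoint D)
    (hDK : ∃ c > (0:ℝ), ∀ y : Hm,
      c * ‖y‖ ^ 2 ≤ (inner ℂ ((D + (adjoint K) ∘L A ∘L K) y) y : ℂ).re) :
    IsUnit (blockOp A K D) := by
  obtain ⟨α, hα, hApos⟩ := hApos
  obtain ⟨c, hc, hDK⟩ := hDK
  set E : Hm →L[ℂ] Hm := D + (adjoint K) ∘L A ∘L K with hE
  -- lower triangular factor L(x,y) = (x, K*x + y)
  set L : (Hp × Hm) →L[ℂ] (Hp × Hm) :=
    (fst ℂ Hp Hm).prod ((adjoint K) ∘L fst ℂ Hp Hm + snd ℂ Hp Hm) with hL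
  set Li : (Hp × Hm) →L[ℂ] (Hp × Hm) :=
    (fst ℂ Hp Hm).prod (snd ℂ Hp Hm - (adjoint K) ∘L fst ℂ Hp Hm) with hLi
  -- upper triangular factor U(x,y) = (x - K y, y)
  set U : (Hp × Hm) →L[ℂ] (Hp × Hm) :=
    (fst ℂ Hp Hm - K ∘L snd ℂ Hp Hm).prod (snd ℂ Hp Hm) with hU
  set Ui : (Hp × Hm) →L[ℂ] (Hp × Hm) :=
    (fst ℂ Hp Hm + K ∘L snd ℂ Hp Hm).prod (snd ℂ Hp Hm) with hUi
  -- diagonal factor M(x,y) = (A x, E y)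
  set M : (Hp × Hm) →L[ℂ] (Hp × Hm) :=
    (A ∘L fst ℂ Hp Hm).prod (E ∘L snd ℂ Hp Hm) with hM
  have hLunit : IsUnit L := by
    refine ⟨⟨L, Li, ?_, ?_⟩, rfl⟩ <;>
    · apply ContinuousLinearMap.ext
      rintro ⟨x, y⟩
      simp [hL, hLi, ContinuousLinearMap.mul_def, Prod.ext_iff]
  have hUunit : IsUnit U := by
    refine ⟨⟨U, Ui, ?_, ?_⟩, rfl⟩ <;>
    · apply ContinuousLinearMap.ext
      rintro ⟨x, y⟩
      simp [hU, hUi, ContinuousLinearMap.mul_def, Prod.ext_iff]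
  have hAunit : IsUnit A := isUnit_of_coercive A hα hApos
  have hEunit : IsUnit E := isUnit_of_coercive E hc hDK
  have hMunit : IsUnit M := by
    rw [ContinuousLinearMap.isUnit_iff_bijective]
    have hAb := ContinuousLinearMap.isUnit_iff_bijective.mp hAunit
    have hEb := ContinuousLinearMap.isUnit_iff_bijective.mp hEunit
    have : (M : (Hp × Hm) → (Hp × Hm)) = Prod.map A E := by
      funext z; simp [hM, Prod.map]
    rw [this]
    exact hAb.prodMap hEb
  have hfact : blockOp A K D = L * M * U := by
    apply ContinuousLinearMap.ext
    rintro ⟨x, y⟩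
    simp [blockOp, hL, hM, hU, hE, ContinuousLinearMap.mul_def, Prod.ext_iff]
  rw [hfact]
  exact (hLunit.mul hMunit).mul hUunit
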